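/- Define B_Λ = (1/π) ∫₀^{Λ/√(1+Λ²)} (z² − z⁴/3)/(1 − z²) dz for Λ > 0. Then B_Λ = (2/(3π)) log Λ − 5/(9π) + (2/(3π)) log 2 + O(1/Λ²) as Λ → ∞. -/

import Mathlib

open Filter

/-- The zero-momentum vacuum polarization constant `B_Λ`. -/
noncomputable def BLam (Λ : ℝ) : ℝ :=
  (1 / Real.pi) * ∫ z in (0:ℝ)..(Λ / Real.sqrt (1 + Λ ^ 2)), (z ^ 2 - z ^ 4 / 3) / (1 - z ^ 2)

lemma integral_eval {a : ℝ} (h0 : 0 ≤ a) (h1 : a < 1) :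
    ∫ z in (0:ℝ)..a, (z ^ 2 - z ^ 4 / 3) / (1 - z ^ 2)
      = a ^ 3 / 9 - 2 * a / 3 + (1 / 3) * (Real.log (1 + a) - Real.log (1 - a)) := by
  have huIcc : Set.uIcc (0:ℝ) a = Set.Icc 0 a := Set.uIcc_of_le h0
  have hderiv : ∀ z ∈ Set.uIcc (0:ℝ) a,
      HasDerivAt (fun z : ℝ => z ^ 3 / 9 - 2 * z / 3
        + (1 / 3) * (Real.log (1 + z) - Real.log (1 - z)))
        ((z ^ 2 - z ^ 4 / 3) / (1 - z ^ 2)) z := by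
    intro z hz
    rw [huIcc] at hz
    obtain ⟨hz0, hza⟩ := hz
    have h1z : (0:ℝ) < 1 + z := by linarith
    have h2z : (0:ℝ) < 1 - z := by linarith
    have hne : 1 - z ^ 2 ≠ 0 := by nlinarith
    have H1 : HasDerivAt (fun z : ℝ => Real.log (1 + z)) (1 / (1 + z)) z := by
      have := (HasDerivAt.const_add 1 (hasDerivAt_id z)).log h1z.ne'
      simpa using this
    have H2 : HasDerivAt (fun z : ℝ => Real.log (1 - z)) ((-1) / (1 - z)) z := by
      have := (HasDerivAt.const_sub 1 (hasDerivAt_id z)).log h2z.ne'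
      simpa using this
    have H3 : HasDerivAt (fun z : ℝ => z ^ 3 / 9 - 2 * z / 3)
        ((3 : ℕ) * z ^ 2 / 9 - 2 / 3) z := by
      have h3 := (hasDerivAt_pow 3 z).div_const 9
      have h4 := ((hasDerivAt_id z).const_mul 2).div_const 3
      refine (h3.sub h4).congr_deriv ?_
      norm_num
    have H := H3.add ((H1.sub H2).const_mul (1 / 3))
    refine H.congr_deriv ?_
    field_simp
    ring
  have hcont : ContinuousOn (fun z : ℝ => (z ^ 2 - z ^ 4 / 3) / (1 - z ^ 2))
      (Set.uIcc (0:ℝ) a) := by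
    apply ContinuousOn.div (by fun_prop) (by fun_prop)
    intro z hz
    rw [huIcc] at hz
    have : z ^ 2 < 1 := by nlinarith [hz.1, hz.2]
    exact ne_of_gt (by linarith)
  have := intervalIntegral.integral_eq_sub_of_hasDerivAt hderiv hcont.intervalIntegrable
  rw [this]
  norm_num

set_option maxHeartbeats 1000000 in
theorem stmt_5 :
    (fun Λ : ℝ => BLam Λ -
        ((2 / (3 * Real.pi)) * Real.log Λ - 5 / (9 * Real.pi)
          + (2 / (3 * Real.pi)) * Real.log 2))
      =O[atTop] fun Λ : ℝ => 1 / Λ ^ 2 := by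
  rw [Asymptotics.isBigO_iff]
  refine ⟨1, ?_⟩
  filter_upwards [eventually_ge_atTop (1:ℝ)] with Λ hΛ
  have hΛ0 : (0:ℝ) < Λ := by linarith
  have hπ : (0:ℝ) < Real.pi := Real.pi_pos
  have hπ3 : (3:ℝ) ≤ Real.pi := Real.pi_gt_three.le
  simp only [BLam]
  set s := Real.sqrt (1 + Λ ^ 2) with hs
  have hs2 : s ^ 2 = 1 + Λ ^ 2 := Real.sq_sqrt (by positivity)
  have hs0 : 0 < s := Real.sqrt_pos.mpr (by positivity)
  have hsΛ : Λ < s := by nlinarith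
  clear_value s
  have ha0 : 0 ≤ Λ / s := by positivity
  have ha1 : Λ / s < 1 := (div_lt_one hs0).mpr hsΛ
  rw [integral_eval ha0 ha1]
  set a := Λ / s with ha
  clear_value a
  have h1a : 1 + a = (s + Λ) / s := by
    rw [ha]; field_simp
  have h1a' : 1 - a = 1 / (s * (s + Λ)) := by
    rw [ha, eq_div_iff (by positivity)]
    field_simp
    nlinarith
  have hlog : Real.log (1 + a) - Real.log (1 - a)
      = 2 * Real.log ((s + Λ) / (2 * Λ)) + 2 * Real.log Λ + 2 * Real.log 2 := by
    rw [h1a, h1a', Real.log_div (by positivity) hs0.ne',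
        Real.log_div one_ne_zero (by positivity),
        Real.log_mul hs0.ne' (by positivity),
        Real.log_div (by positivity) (by positivity),
        Real.log_mul two_ne_zero hΛ0.ne', Real.log_one]
    ring
  have key : (1 / Real.pi) * (a ^ 3 / 9 - 2 * a / 3
        + 1 / 3 * (Real.log (1 + a) - Real.log (1 - a)))
      - (2 / (3 * Real.pi) * Real.log Λ - 5 / (9 * Real.pi)
        + 2 / (3 * Real.pi) * Real.log 2)
      = (1 / Real.pi) * ((a ^ 3 - 6 * a + 5) / 9
        + (2 / 3) * Real.log ((s + Λ) / (2 * Λ))) := by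
    rw [hlog]; field_simp; ring
  rw [key]
  -- bounds
  have hr1 : 1 ≤ (s + Λ) / (2 * Λ) := by
    rw [le_div_iff₀ (by positivity)]; linarith
  have hL0 : 0 ≤ Real.log ((s + Λ) / (2 * Λ)) := Real.log_nonneg hr1
  have hLle : Real.log ((s + Λ) / (2 * Λ)) ≤ 1 / (4 * Λ ^ 2) := by
    have h := Real.log_le_sub_one_of_pos (x := (s + Λ) / (2 * Λ)) (by positivity)
    have heq : (s + Λ) / (2 * Λ) - 1 = (s - Λ) / (2 * Λ) := by field_simp; ring
    rw [heq] at h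
    refine h.trans ?_
    rw [div_le_div_iff₀ (by positivity) (by positivity)]
    nlinarith [hs2, hsΛ, hΛ0]
  have h1ma : 1 - a ≤ 1 / (2 * Λ ^ 2) := by
    rw [h1a']
    apply div_le_div_of_nonneg_left (by norm_num) (by positivity)
    nlinarith
  have h1a0 : (0:ℝ) ≤ 1 - a := by linarith
  have h1pa : (0:ℝ) ≤ 1 + a := by linarith
  have h5 : 0 ≤ 5 - a - a ^ 2 := by nlinarith [ha0, ha1.le]
  have hpoly0 : 0 ≤ a ^ 3 - 6 * a + 5 := by
    nlinarith [mul_nonneg h1a0 h5]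
  have hpolyle : a ^ 3 - 6 * a + 5 ≤ 5 * (1 - a) := by
    nlinarith [mul_nonneg (mul_nonneg ha0 h1a0) h1pa]
  have hexpr0 : 0 ≤ (1 / Real.pi) * ((a ^ 3 - 6 * a + 5) / 9
      + (2 / 3) * Real.log ((s + Λ) / (2 * Λ))) := by
    apply mul_nonneg (by positivity)
    exact add_nonneg (div_nonneg hpoly0 (by norm_num)) (mul_nonneg (by norm_num) hL0)
  simp only [Real.norm_eq_abs, one_mul]
  rw [abs_of_nonneg hexpr0, abs_of_pos (show (0:ℝ) < 1 / Λ ^ 2 by positivity)]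
  have hPle : a ^ 3 - 6 * a + 5 ≤ 5 * (1 / (2 * Λ ^ 2)) := by nlinarith [hpolyle, h1ma]
  calc (1 / Real.pi) * ((a ^ 3 - 6 * a + 5) / 9 + (2 / 3) * Real.log ((s + Λ) / (2 * Λ)))
      ≤ (1 / Real.pi) * ((5 * (1 / (2 * Λ ^ 2))) / 9 + (2 / 3) * (1 / (4 * Λ ^ 2))) := by
        gcongr
    _ ≤ (1 / 3) * ((5 * (1 / (2 * Λ ^ 2))) / 9 + (2 / 3) * (1 / (4 * Λ ^ 2))) := by
        have hX : (0:ℝ) ≤ 5 * (1 / (2 * Λ ^ 2)) / 9 + 2 / 3 * (1 / (4 * Λ ^ 2)) := by positivity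
        have h13 : 1 / Real.pi ≤ 1 / 3 := by
          apply one_div_le_one_div_of_le <;> linarith
        exact mul_le_mul_of_nonneg_right h13 hX
    _ = 4 / 27 * (1 / Λ ^ 2) := by ring
    _ ≤ 1 / Λ ^ 2 := by
        have hx : (0:ℝ) < 1 / Λ ^ 2 := by positivity
        linarith
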